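/- First-derivative consequence of Sylvester's identity (coefficient of a_{n+1,n+1}·a_{i,n+1} in the inductive step): Let R be a commutative ring, n ≥ 0, A an (n+2)×(n+2) matrix over R, v : Fin (n+2) → R, and r an index in Fin (n+2) with 2 ≤ r (i.e., r is distinct from 0 and 1). Set B = A.updateRow r v. Then det(B) · det(A_{0,1|0,1}) + det(A) · det(B_{0,1|0,1}) = det(B_{0|0}) · det(A_{1|1}) + det(A_{0|0}) · det(B_{1|1}) − det(B_{0|1}) · det(A_{1|0}) − det(A_{0|1}) · det(B_{1|0}). -/

import Mathlib

section SylvesterAux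

open Matrix
variable {R : Type*} [CommRing R] {n : ℕ}

lemma mymul_updateColumn {m : Type*} [Fintype m] [DecidableEq m] (A B : Matrix m m R) (j : m)
    (v : m → R) : A * (B.updateCol j v) = (A * B).updateCol j (A *ᵥ v) := by
  ext i k
  by_cases h : k = j <;>
    simp [Matrix.mul_apply, Matrix.updateCol_apply, h, Matrix.mulVec, dotProduct]

lemma mydet_updateColumn_single (M : Matrix (Fin (n+1)) (Fin (n+1)) R) (i j : Fin (n+1)) (c : R) :
    (M.updateCol j (Pi.single i c)).det
      = (-1) ^ ((i : ℕ) + (j : ℕ)) * c * (M.submatrix i.succAbove j.succAbove).det := by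
  rw [det_succ_column _ j, Finset.sum_eq_single i]
  · rw [updateCol_self, Pi.single_eq_same, submatrix_updateCol_succAbove]
  · intro b _ hb
    rw [updateCol_self, Pi.single_eq_of_ne hb, mul_zero, zero_mul]
  · simp

lemma mysub_updateColumn (A : Matrix (Fin (n+2)) (Fin (n+2)) R) {k : ℕ}
    (f : Fin k → Fin (n+2)) {g : Fin k → Fin (n+2)}
    (hg : Function.Injective g) {c : Fin (n+2)} {c' : Fin k}
    (h : g c' = c) (v : Fin (n+2) → R) :
    (A.updateCol c v).submatrix f g = (A.submatrix f g).updateCol c' (v ∘ f) := by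
  ext p q
  by_cases hq : q = c'
  · subst hq; simp [h]
  · rw [submatrix_apply, updateCol_ne (fun hc => hq (hg (h ▸ hc))), updateCol_ne hq,
      submatrix_apply]

-- succAbove facts
lemma h1sa0 : ((1 : Fin (n+2)).succAbove (0 : Fin (n+1))) = 0 := by
  simp [Fin.succAbove, Fin.lt_def]
lemma h1sa_comp (p : Fin n) :
    (1 : Fin (n+2)).succAbove ((0 : Fin (n+1)).succAbove p) = p.succ.succ := by
  apply Fin.ext
  simp [Fin.succAbove, Fin.lt_def]

lemma mydet_one_two_cols (u w : Fin (n+2) → R) :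
    (((1 : Matrix (Fin (n+2)) (Fin (n+2)) R).updateCol 0 u).updateCol 1 w).det
      = u 0 * w 1 - w 0 * u 1 := by
  set C := ((1 : Matrix (Fin (n+2)) (Fin (n+2)) R).updateCol 0 u).updateCol 1 w with hC
  let e : Fin 2 ⊕ Fin n ≃ Fin (n+2) := finSumFinEquiv.trans (finCongr (by omega))
  have he0 : e (Sum.inl 0) = 0 := rfl
  have he1 : e (Sum.inl 1) = 1 := rfl
  have her : ∀ q : Fin n, e (Sum.inr q) = q.succ.succ := by
    intro q
    apply Fin.ext
    simp [e, finSumFinEquiv, Fin.natAdd]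
    omega
  have hC0 : ∀ x, C x 0 = u x := by
    intro x
    rw [hC, updateCol_ne (by simp [Fin.ext_iff] : (0 : Fin (n+2)) ≠ 1), updateCol_self]
  have hC1 : ∀ x, C x 1 = w x := by
    intro x; rw [hC, updateCol_self]
  have hCr : ∀ (x) (q : Fin n), C x q.succ.succ
      = (1 : Matrix (Fin (n+2)) (Fin (n+2)) R) x q.succ.succ := by
    intro x q
    have h1 : (q.succ.succ : Fin (n+2)) ≠ 1 := by
      simp [Fin.ext_iff]
    have h0 : (q.succ.succ : Fin (n+2)) ≠ 0 := by
      simp [Fin.ext_iff]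
    rw [hC, updateCol_ne h1, updateCol_ne h0]
  rw [← det_submatrix_equiv_self e C]
  have : C.submatrix e e = fromBlocks !![u 0, w 0; u 1, w 1] 0
      (Matrix.of fun (q : Fin n) (p : Fin 2) => C (e (Sum.inr q)) (e (Sum.inl p)))
      (1 : Matrix (Fin n) (Fin n) R) := by
    ext i j
    cases i with
    | inl i => cases j with
      | inl j =>
        fin_cases i <;> fin_cases j <;>
          simp [he0, he1, hC0, hC1, fromBlocks_apply₁₁]
      | inr j =>
        simp only [submatrix_apply, fromBlocks_apply₁₂, Matrix.zero_apply, her]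
        rw [hCr]
        fin_cases i <;> simp [he0, he1, one_apply, Fin.ext_iff]
    | inr i => cases j with
      | inl j => simp [fromBlocks_apply₂₁]
      | inr j =>
        simp only [submatrix_apply, fromBlocks_apply₂₂, her]
        rw [hCr]
        simp [one_apply, Fin.ext_iff]
  rw [this, det_fromBlocks_zero₁₂, det_one, mul_one, det_fin_two]
  simp


lemma mykey (A : Matrix (Fin (n+2)) (Fin (n+2)) R) :
    A.det * ((A.submatrix (0 : Fin (n+2)).succAbove (0 : Fin (n+2)).succAbove).det *
        (A.submatrix (1 : Fin (n+2)).succAbove (1 : Fin (n+2)).succAbove).det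
      - (A.submatrix (0 : Fin (n+2)).succAbove (1 : Fin (n+2)).succAbove).det *
        (A.submatrix (1 : Fin (n+2)).succAbove (0 : Fin (n+2)).succAbove).det)
    = A.det * (A.det *
        (A.submatrix (fun p : Fin n => p.succ.succ) (fun q : Fin n => q.succ.succ)).det) := by
  set C := (((1 : Matrix (Fin (n+2)) (Fin (n+2)) R).updateCol 0
      (fun i => adjugate A i 0)).updateCol 1 (fun i => adjugate A i 1)) with hCdef
  have hcol : ∀ j : Fin (n+2), A *ᵥ (fun i => adjugate A i j) = Pi.single j A.det := by
    intro j
    ext k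
    have h := congr_fun (congr_fun (mul_adjugate A) k) j
    simp only [Matrix.mul_apply, Matrix.smul_apply, Matrix.one_apply, smul_eq_mul] at h
    simp only [Matrix.mulVec, dotProduct]
    rw [h, Pi.single_apply]
    by_cases hk : k = j <;> simp [hk]
  have hAC : A * C = (A.updateCol 0 (Pi.single 0 A.det)).updateCol 1
      (Pi.single 1 A.det) := by
    rw [hCdef, mymul_updateColumn, mymul_updateColumn, Matrix.mul_one, hcol, hcol]
  -- det (A*C) = detA^2 * det A22
  have hdetAC : (A * C).det = A.det * (A.det *
      (A.submatrix (fun p : Fin n => p.succ.succ) (fun q : Fin n => q.succ.succ)).det) := by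
    rw [hAC]
    rw [mydet_updateColumn_single]
    rw [mysub_updateColumn _ _ (Fin.succAbove_right_injective) h1sa0]
    have hsingle : (Pi.single (0 : Fin (n+2)) A.det) ∘ (1 : Fin (n+2)).succAbove
        = Pi.single (0 : Fin (n+1)) A.det := by
      funext p
      by_cases hp : p = 0
      · subst hp
        rw [Function.comp_apply, h1sa0, Pi.single_eq_same, Pi.single_eq_same]
      · have : (1 : Fin (n+2)).succAbove p ≠ 0 := by
          rw [← h1sa0]
          exact fun hc => hp (Fin.succAbove_right_injective hc)
        simp [Function.comp, Pi.single_eq_of_ne hp, Pi.single_eq_of_ne this]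
    rw [hsingle, mydet_updateColumn_single, submatrix_submatrix]
    have hcomp : ((1 : Fin (n+2)).succAbove ∘ (0 : Fin (n+1)).succAbove)
        = fun p : Fin n => p.succ.succ := funext fun p => h1sa_comp p
    have hcomp' : ((1 : Fin (n+2)).succAbove ∘ (0 : Fin (n+1)).succAbove : Fin n → Fin (n+2))
        = fun p : Fin n => p.succ.succ := hcomp
    rw [hcomp']
    norm_num
  have hdetC : C.det = (A.submatrix (0 : Fin (n+2)).succAbove (0 : Fin (n+2)).succAbove).det *
        (A.submatrix (1 : Fin (n+2)).succAbove (1 : Fin (n+2)).succAbove).det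
      - (A.submatrix (0 : Fin (n+2)).succAbove (1 : Fin (n+2)).succAbove).det *
        (A.submatrix (1 : Fin (n+2)).succAbove (0 : Fin (n+2)).succAbove).det := by
    rw [hCdef, mydet_one_two_cols]
    rw [adjugate_fin_succ_eq_det_submatrix, adjugate_fin_succ_eq_det_submatrix,
      adjugate_fin_succ_eq_det_submatrix, adjugate_fin_succ_eq_det_submatrix]
    norm_num
    ring
  rw [← hdetAC, det_mul, hdetC]

lemma mydj (A : Matrix (Fin (n+2)) (Fin (n+2)) R) :
    A.det * (A.submatrix (fun p : Fin n => p.succ.succ) (fun q : Fin n => q.succ.succ)).det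
      = (A.submatrix (0 : Fin (n+2)).succAbove (0 : Fin (n+2)).succAbove).det *
          (A.submatrix (1 : Fin (n+2)).succAbove (1 : Fin (n+2)).succAbove).det
        - (A.submatrix (0 : Fin (n+2)).succAbove (1 : Fin (n+2)).succAbove).det *
          (A.submatrix (1 : Fin (n+2)).succAbove (0 : Fin (n+2)).succAbove).det := by
  let φ : MvPolynomial (Fin (n+2) × Fin (n+2)) ℤ →ₐ[ℤ] R :=
    MvPolynomial.aeval fun p => A p.1 p.2
  have hA : (mvPolynomialX (Fin (n+2)) (Fin (n+2)) ℤ).map φ = A := by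
    have h := mvPolynomialX_mapMatrix_aeval ℤ A
    rwa [AlgHom.mapMatrix_apply] at h
  have hM := mul_left_cancel₀ (det_mvPolynomialX_ne_zero (Fin (n+2)) ℤ)
    (mykey (mvPolynomialX (Fin (n+2)) (Fin (n+2)) ℤ)).symm
  have hmap := congrArg φ hM
  simp only [_root_.map_mul, map_sub, AlgHom.map_det, AlgHom.mapMatrix_apply,
    ← Matrix.submatrix_map, hA] at hmap
  exact hmap

lemma mysub_updateRow' (A : Matrix (Fin (n+2)) (Fin (n+2)) R) {k : ℕ} {f : Fin k → Fin (n+2)}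
    (hf : Function.Injective f) (g : Fin k → Fin (n+2)) {r : Fin (n+2)} {r' : Fin k}
    (h : f r' = r) (v : Fin (n+2) → R) :
    (A.updateRow r v).submatrix f g = (A.submatrix f g).updateRow r' (v ∘ g) := by
  ext p q
  by_cases hp : p = r'
  · subst hp; simp [h]
  · rw [submatrix_apply, updateRow_ne (fun hc => hp (hf (h ▸ hc))), updateRow_ne hp,
      submatrix_apply]

lemma mydet_expand (A : Matrix (Fin (n+2)) (Fin (n+2)) R) {k : ℕ} {f : Fin k → Fin (n+2)}
    (hf : Function.Injective f) (g : Fin k → Fin (n+2)) {r : Fin (n+2)} {r' : Fin k}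
    (h : f r' = r) (v : Fin (n+2) → R) :
    ((A.updateRow r v).submatrix f g).det
      = (A.submatrix f g).det + ((A.updateRow r (v - A r)).submatrix f g).det := by
  rw [mysub_updateRow' A hf g h, mysub_updateRow' A hf g h]
  have hsplit : v ∘ g = (A.submatrix f g) r' + ((v - A r) ∘ g) := by
    funext q
    simp [h, Function.comp]
  rw [hsplit, det_updateRow_add, updateRow_eq_self]

lemma mydet_expand_full (A : Matrix (Fin (n+2)) (Fin (n+2)) R) (r : Fin (n+2))
    (v : Fin (n+2) → R) :
    (A.updateRow r v).det = A.det + (A.updateRow r (v - A r)).det := by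
  have : v = A r + (v - A r) := by ring
  conv_lhs => rw [this]
  rw [det_updateRow_add, updateRow_eq_self]

theorem sylvester_first_derivative_aux {R : Type*} [CommRing R] (n : ℕ)
    (A : Matrix (Fin (n + 2)) (Fin (n + 2)) R) (v : Fin (n + 2) → R)
    (r : Fin (n + 2)) (hr : 2 ≤ r.val) :
    (A.updateRow r v).det *
        (A.submatrix (fun p : Fin n => p.succ.succ) (fun q : Fin n => q.succ.succ)).det
      + A.det *
        ((A.updateRow r v).submatrix
          (fun p : Fin n => p.succ.succ) (fun q : Fin n => q.succ.succ)).det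
    = ((A.updateRow r v).submatrix (0 : Fin (n + 2)).succAbove (0 : Fin (n + 2)).succAbove).det *
        (A.submatrix (1 : Fin (n + 2)).succAbove (1 : Fin (n + 2)).succAbove).det
      + (A.submatrix (0 : Fin (n + 2)).succAbove (0 : Fin (n + 2)).succAbove).det *
        ((A.updateRow r v).submatrix
          (1 : Fin (n + 2)).succAbove (1 : Fin (n + 2)).succAbove).det
      - ((A.updateRow r v).submatrix
          (0 : Fin (n + 2)).succAbove (1 : Fin (n + 2)).succAbove).det *
        (A.submatrix (1 : Fin (n + 2)).succAbove (0 : Fin (n + 2)).succAbove).det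
      - (A.submatrix (0 : Fin (n + 2)).succAbove (1 : Fin (n + 2)).succAbove).det *
        ((A.updateRow r v).submatrix
          (1 : Fin (n + 2)).succAbove (0 : Fin (n + 2)).succAbove).det := by
  obtain ⟨r0, hr0⟩ := Fin.exists_succAbove_eq
    (show r ≠ (0 : Fin (n+2)) by rw [ne_eq, Fin.ext_iff, Fin.val_zero]; omega)
  obtain ⟨r1, hr1⟩ := Fin.exists_succAbove_eq
    (show r ≠ (1 : Fin (n+2)) by rw [ne_eq, Fin.ext_iff, Fin.val_one]; omega)
  have inj0 : Function.Injective (0 : Fin (n+2)).succAbove := Fin.succAbove_right_injective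
  have inj1 : Function.Injective (1 : Fin (n+2)).succAbove := Fin.succAbove_right_injective
  have injss : Function.Injective (fun p : Fin n => p.succ.succ) :=
    fun a b h => Fin.succ_injective _ (Fin.succ_injective _ h)
  have hr2 : (fun p : Fin n => p.succ.succ) ⟨r.val - 2, by omega⟩ = r := by
    apply Fin.ext
    simp [Fin.val_succ]
    omega
  have e0 := mydet_expand_full A r v
  have e00 := mydet_expand A inj0 (0 : Fin (n+2)).succAbove hr0 v
  have e01 := mydet_expand A inj0 (1 : Fin (n+2)).succAbove hr0 v
  have e10 := mydet_expand A inj1 (0 : Fin (n+2)).succAbove hr1 v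
  have e11 := mydet_expand A inj1 (1 : Fin (n+2)).succAbove hr1 v
  have e22 := mydet_expand A injss (fun q : Fin n => q.succ.succ) hr2 v
  have hA := mydj A
  have hD := mydj (A.updateRow r (v - A r))
  have hB := mydj (A.updateRow r v)
  rw [e0, e00, e01, e10, e11, e22] at hB
  rw [e0, e00, e01, e10, e11, e22]
  linear_combination hB + hA - hD

end SylvesterAux



/-- First-derivative consequence of Sylvester's identity: for `B = A.updateRow r v`
with `r` distinct from `0` and `1` (i.e. `2 ≤ r`),
`det B * det A_{0,1|0,1} + det A * det B_{0,1|0,1}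
  = det B_{0|0} * det A_{1|1} + det A_{0|0} * det B_{1|1}
    - det B_{0|1} * det A_{1|0} - det A_{0|1} * det B_{1|0}`. -/
theorem sylvester_first_derivative {R : Type*} [CommRing R] (n : ℕ)
    (A : Matrix (Fin (n + 2)) (Fin (n + 2)) R) (v : Fin (n + 2) → R)
    (r : Fin (n + 2)) (hr : 2 ≤ r.val) :
    (A.updateRow r v).det *
        (A.submatrix (fun p : Fin n => p.succ.succ) (fun q : Fin n => q.succ.succ)).det
      + A.det *
        ((A.updateRow r v).submatrix
          (fun p : Fin n => p.succ.succ) (fun q : Fin n => q.succ.succ)).det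
    = ((A.updateRow r v).submatrix (0 : Fin (n + 2)).succAbove (0 : Fin (n + 2)).succAbove).det *
        (A.submatrix (1 : Fin (n + 2)).succAbove (1 : Fin (n + 2)).succAbove).det
      + (A.submatrix (0 : Fin (n + 2)).succAbove (0 : Fin (n + 2)).succAbove).det *
        ((A.updateRow r v).submatrix
          (1 : Fin (n + 2)).succAbove (1 : Fin (n + 2)).succAbove).det
      - ((A.updateRow r v).submatrix
          (0 : Fin (n + 2)).succAbove (1 : Fin (n + 2)).succAbove).det *
        (A.submatrix (1 : Fin (n + 2)).succAbove (0 : Fin (n + 2)).succAbove).det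
      - (A.submatrix (0 : Fin (n + 2)).succAbove (1 : Fin (n + 2)).succAbove).det *
        ((A.updateRow r v).submatrix
          (1 : Fin (n + 2)).succAbove (0 : Fin (n + 2)).succAbove).det := by
  exact sylvester_first_derivative_aux n A v r hr
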